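/- Let k be an algebraically closed field of positive characteristic p, and let U be a connected normal k-scheme of finite type with only constant global units (H⁰(U, O_U^×) = k^×). Then a stratified line bundle L = (L_n, σ_n)_{n∈ℕ} on U (where σ_n : F^* L_{n+1} ≅ L_n and F is the absolute Frobenius) is determined up to isomorphism of stratified bundles by the isomorphism classes of the line bundles L_n: if M = (M_n, τ_n) is another stratified line bundle with L_n ≅ M_n as O_U-modules for all n, then L ≅ M as stratified line bundles. -/

import Mathlib

open CategoryTheory

/-- Over an algebraically closed field `k` of characteristic `p > 0`, on a connected
normal finite type `k`-scheme `U` all of whose global units are constant, a stratified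
line bundle is determined up to stratified isomorphism by the isomorphism classes of its
terms.  Following Katz, a stratified line bundle is a sequence `(Lₙ, σₙ : F^*Lₙ₊₁ ≅ Lₙ)`;
we model the groupoid of line bundles on `U` by a category `C` together with the
Frobenius pullback functor `F : C ⥤ C`, the identifications `e : Aut(L) ≃* k^×` of
automorphism groups with the (constant) global units — compatible with conjugation by
isomorphisms and such that `F` acts on automorphisms by `λ ↦ λ^p`.  Given stratified
line bundles `(L, σ)` and `(M, τ)` with `Lₙ ≅ Mₙ` for all `n`, there is an isomorphism
of stratified bundles, i.e. a family of isomorphisms compatible with `σ` and `τ`. -/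
theorem stmt_7 {k : Type*} [Field k] [IsAlgClosed k] (p : ℕ) [Fact p.Prime] [CharP k p]
    {C : Type*} [Category C] (F : C ⥤ C)
    (e : ∀ X : C, Aut X ≃* kˣ)
    (he : ∀ (X Y : C) (u : X ≅ Y) (a : Aut X), e Y ((u.symm ≪≫ a) ≪≫ u) = e X a)
    (hF : ∀ (X : C) (a : Aut X), e (F.obj X) (F.mapIso a) = (e X a) ^ p)
    (L M : ℕ → C)
    (σ : ∀ n, F.obj (L (n + 1)) ≅ L n) (τ : ∀ n, F.obj (M (n + 1)) ≅ M n)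
    (u : ∀ n, L n ≅ M n) :
    ∃ f : ∀ n, L n ≅ M n, ∀ n, F.mapIso (f (n + 1)) ≪≫ τ n = σ n ≪≫ f n := by
  have hp : p ≠ 0 := (Fact.out : p.Prime).ne_zero
  -- every unit of k has a p-th root
  have hroot : ∀ x : kˣ, ∃ y : kˣ, y ^ p = x := by
    intro x
    obtain ⟨z, hz⟩ := IsAlgClosed.exists_pow_nat_eq (x : k) (n := p) (Nat.pos_of_ne_zero hp)
    have hz0 : z ≠ 0 := by
      intro h
      rw [h, zero_pow hp] at hz
      exact x.ne_zero hz.symm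
    refine ⟨Units.mk0 z hz0, ?_⟩
    ext
    push_cast
    exact hz
  choose rt hrt using hroot
  -- the inductive step
  have step : ∀ n (fn : L n ≅ M n), ∃ g : L (n + 1) ≅ M (n + 1),
      F.mapIso g ≪≫ τ n = σ n ≪≫ fn := by
    intro n fn
    set t : Aut (F.obj (L (n + 1))) :=
      (σ n ≪≫ fn) ≪≫ (F.mapIso (u (n + 1)) ≪≫ τ n).symm with ht
    set c : Aut (L (n + 1)) := (e (L (n + 1))).symm (rt (e (F.obj (L (n + 1))) t)) with hc
    have hce : e (F.obj (L (n + 1))) (F.mapIso c) = e (F.obj (L (n + 1))) t := by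
      rw [hF, hc, MulEquiv.apply_symm_apply, hrt]
    have hct : F.mapIso (c : L (n + 1) ≅ L (n + 1)) = (t : F.obj (L (n + 1)) ≅ _) :=
      (e (F.obj (L (n + 1)))).injective hce
    refine ⟨(c : L (n + 1) ≅ L (n + 1)) ≪≫ u (n + 1), ?_⟩
    erw [F.mapIso_trans, Iso.trans_assoc, hct, ht]
    simp
  choose st hst using step
  refine ⟨fun n => Nat.rec (u 0) (fun n fn => st n fn) n, fun n => hst n _⟩
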